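/- Let G be a triconnected graph, let C be a simple cycle of G, and let u and v be two vertices of G \ C all of whose neighbors in G lie on C. Then the graph obtained from G by identifying u and v into a single vertex is triconnected. -/

import Mathlib

/-! Preamble: finite multigraphs, connectivity, closed walks, contractions,
planar embeddings, levels, double layers, slices, branch decompositions. -/

structure Multigraph : Type 1 where
  V : Type
  E : Type
  fintypeV : Fintype V
  fintypeE : Fintype E
  decEqV : DecidableEq V
  decEqE : DecidableEq E
  ends : E → Sym2 V

attribute [instance] Multigraph.fintypeV Multigraph.fintypeE
attribute [instance] Multigraph.decEqV Multigraph.decEqE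

namespace Multigraph

variable (G : Multigraph)

/-- Reachability inside the vertex set `A`, using only edges in `S`. -/
def Reach (A : Set G.V) (S : Set G.E) : G.V → G.V → Prop :=
  Relation.ReflTransGen (fun a b => a ∈ A ∧ b ∈ A ∧ ∃ e ∈ S, G.ends e = s(a, b))

/-- The subgraph with vertex set `A` and the edges of `S` (restricted to `A`)
is connected. -/
def ConnectedOn (A : Set G.V) (S : Set G.E) : Prop :=
  ∀ u ∈ A, ∀ v ∈ A, G.Reach A S u v

def Connected : Prop := G.ConnectedOn Set.univ Set.univ

/-- `G` remains connected after deleting any `k - 1` edges. -/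
def EdgeConn (k : ℕ) : Prop :=
  ∀ F : Finset G.E, F.card < k → G.ConnectedOn Set.univ (↑F)ᶜ

/-- `G` remains connected after deleting any `k - 1` vertices. -/
def VertexConn (k : ℕ) : Prop :=
  ∀ W : Finset G.V, W.card < k → G.ConnectedOn (↑W)ᶜ Set.univ

/-- The spanning subgraph of `G` with edge set `S` is `k`-edge connected. -/
def EdgeConnSub (S : Set G.E) (k : ℕ) : Prop :=
  ∀ F : Finset G.E, F.card < k → G.ConnectedOn Set.univ (S \ ↑F)

/-- The spanning subgraph of `G` with edge set `S` is `k`-vertex connected. -/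
def VertexConnSub (S : Set G.E) (k : ℕ) : Prop :=
  ∀ W : Finset G.V, W.card < k → G.ConnectedOn (↑W)ᶜ S

def Loopless : Prop := ∀ e : G.E, ¬ (G.ends e).IsDiag

def Simple : Prop := G.Loopless ∧ ∀ e e' : G.E, G.ends e = G.ends e' → e = e'

/-- At most `m` parallel edges between any pair of vertices. -/
def ParallelBound (m : ℕ) : Prop := ∀ p : Sym2 G.V, {e : G.E | G.ends e = p}.ncard ≤ m

def AdjV (u v : G.V) : Prop := ∃ e : G.E, G.ends e = s(u, v)

/-- `H` is a connected component of the subgraph induced by `A`. -/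
def IsCompOf (A H : Set G.V) : Prop :=
  ∃ u ∈ A, H = {v | v ∈ A ∧ G.Reach A Set.univ u v}

end Multigraph

/-! ### Closed walks, circuits and simple cycles -/

structure ClosedWalk (G : Multigraph) where
  n : ℕ
  npos : 0 < n
  vert : ℕ → G.V
  edge : ℕ → G.E
  ends_eq : ∀ i < n, G.ends (edge i) = s(vert i, vert (i + 1))
  closed : vert n = vert 0

namespace ClosedWalk

variable {G : Multigraph} (C : ClosedWalk G)

def edgeSet : Set G.E := {e | ∃ i < C.n, C.edge i = e}

def vertexSet : Set G.V := {v | ∃ i < C.n, C.vert i = v}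

/-- A circuit: a closed walk with no repeated edge. -/
def IsCircuit : Prop := ∀ i < C.n, ∀ j < C.n, C.edge i = C.edge j → i = j

/-- A simple cycle: a circuit with no repeated vertex. -/
def IsSimpleCycle : Prop :=
  C.IsCircuit ∧ ∀ i < C.n, ∀ j < C.n, C.vert i = C.vert j → i = j

end ClosedWalk

namespace Multigraph

variable (G : Multigraph)

/-- `C` is a maximal circuit among the circuits with all edges in `S`. -/
def IsMaxCircuitIn (S : Set G.E) (C : ClosedWalk G) : Prop :=
  C.IsCircuit ∧ C.edgeSet ⊆ S ∧
    ∀ C' : ClosedWalk G, C'.IsCircuit → C'.edgeSet ⊆ S →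
      C.edgeSet ⊆ C'.edgeSet → C'.edgeSet ⊆ C.edgeSet

/-- `C` is a simple cycle all of whose edges lie in `S`. -/
def IsSimpleCycleIn (S : Set G.E) (C : ClosedWalk G) : Prop :=
  C.IsSimpleCycle ∧ C.edgeSet ⊆ S

/-! ### Contractions -/

/-- Identify all vertices in `S` to a single vertex. -/
def contractSetoid (S : Set G.V) : Setoid G.V where
  r a b := a = b ∨ (a ∈ S ∧ b ∈ S)
  iseqv := by
    refine ⟨fun x => Or.inl rfl, ?_, ?_⟩
    · rintro x y (rfl | ⟨hx, hy⟩)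
      · exact Or.inl rfl
      · exact Or.inr ⟨hy, hx⟩
    · rintro x y z (rfl | ⟨hx, hy⟩) h
      · exact h
      · rcases h with rfl | ⟨hy', hz⟩
        · exact Or.inr ⟨hx, hy⟩
        · exact Or.inr ⟨hx, hz⟩

/-- The graph obtained from `G` by contracting the vertex set `S` to one
vertex, deleting the resulting self-loops. -/
noncomputable def contractSet (S : Set G.V) : Multigraph where
  V := Quotient (G.contractSetoid S)
  E := {e : G.E // ¬ (Sym2.map (Quotient.mk (G.contractSetoid S)) (G.ends e)).IsDiag}
  fintypeV := Fintype.ofFinite _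
  fintypeE := Fintype.ofFinite _
  decEqV := Classical.decEq _
  decEqE := Classical.decEq _
  ends := fun e => Sym2.map (Quotient.mk (G.contractSetoid S)) (G.ends e.1)

end Multigraph

namespace Multigraph

variable (G : Multigraph)

/-- Identify the vertices of each connected component of `G ∖ U`. -/
def outsideSetoid (U : Set G.V) : Setoid G.V where
  r a b := a = b ∨ (a ∉ U ∧ b ∉ U ∧ G.Reach Uᶜ Set.univ a b)
  iseqv := by
    refine ⟨fun x => Or.inl rfl, ?_, ?_⟩
    · rintro x y (rfl | ⟨hx, hy, hr⟩)
      · exact Or.inl rfl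
      · refine Or.inr ⟨hy, hx, ?_⟩
        unfold Multigraph.Reach at hr ⊢
        induction hr with
        | refl => exact Relation.ReflTransGen.refl
        | tail _ hab ih =>
          obtain ⟨ha, hb, e, he, hse⟩ := hab
          exact Relation.ReflTransGen.head ⟨hb, ha, e, he, by rw [hse, Sym2.eq_swap]⟩ (ih ha)
    · rintro x y z (rfl | ⟨hx, hy, hxy⟩) h
      · exact h
      · rcases h with rfl | ⟨hy', hz, hyz⟩
        · exact Or.inr ⟨hx, hy, hxy⟩
        · exact Or.inr ⟨hx, hz, hxy.trans hyz⟩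

/-- The graph obtained from `G` by contracting each connected component of
`G ∖ U` to a single node, deleting the resulting self-loops. -/
noncomputable def contractOutside (U : Set G.V) : Multigraph where
  V := Quotient (G.outsideSetoid U)
  E := {e : G.E // ¬ (Sym2.map (Quotient.mk (G.outsideSetoid U)) (G.ends e)).IsDiag}
  fintypeV := Fintype.ofFinite _
  fintypeE := Fintype.ofFinite _
  decEqV := Classical.decEq _
  decEqE := Classical.decEq _
  ends := fun e => Sym2.map (Quotient.mk (G.outsideSetoid U)) (G.ends e.1)

/-- An (arbitrary, fixed) numbering of the edges of `G`. -/
noncomputable def edgeIdx (e : G.E) : ℕ := ((Fintype.equivFin G.E) e : ℕ)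

/-- Delete parallel edges so that at most `m` parallel edges remain between
any pair of vertices (keeping, in each parallel class, the `m` edges of
smallest index). -/
noncomputable def trim (m : ℕ) : Multigraph where
  V := G.V
  E := {e : G.E // {e' : G.E | G.ends e' = G.ends e ∧ G.edgeIdx e' < G.edgeIdx e}.ncard < m}
  fintypeV := G.fintypeV
  fintypeE := Fintype.ofFinite _
  decEqV := G.decEqV
  decEqE := Classical.decEq _
  ends := fun e => G.ends e.1

end Multigraph

/-! ### Planar embeddings, levels and slices -/

/-- A planar embedding of the multigraph `G`: vertices are points of the
plane and edges are arcs joining thir endpoints, arcs being internally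
disjoint from each other and from the vertices. -/
structure Multigraph.PlanarEmb (G : Multigraph) where
  vpos : G.V → ℝ × ℝ
  arc : G.E → ℝ → ℝ × ℝ
  vpos_inj : Function.Injective vpos
  arc_cont : ∀ e, ContinuousOn (arc e) (Set.Icc 0 1)
  arc_ends : ∀ e, Sym2.map vpos (G.ends e) = s(arc e 0, arc e 1)
  arc_inj : ∀ e, ∀ t ∈ Set.Ioo (0:ℝ) 1, ∀ u ∈ Set.Icc (0:ℝ) 1, arc e t = arc e u → t = u
  arc_avoid_vert : ∀ e, ∀ t ∈ Set.Ioo (0:ℝ) 1, arc e t ∉ Set.range vpos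
  arcs_disj : ∀ e e', e ≠ e' → ∀ t ∈ Set.Ioo (0:ℝ) 1, ∀ u ∈ Set.Icc (0:ℝ) 1,
    arc e t ≠ arc e' u

/-- `G` is planar: it admits a planar embedding. -/
def Multigraph.Planar (G : Multigraph) : Prop := Nonempty G.PlanarEmb

/-- A Jordan curve `J` (together with the closed disk it bounds) encloses the
point `p`. -/
def JordanEncloses (J : Set (ℝ × ℝ)) (p : ℝ × ℝ) : Prop :=
  p ∈ J ∨ (p ∉ J ∧ Bornology.IsBounded (connectedComponentIn Jᶜ p))

namespace Multigraph.PlanarEmb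

variable {G : Multigraph} (emb : G.PlanarEmb)

/-- The image in the plane of the subgraph of `G` induced by `A`. -/
def image (A : Set G.V) : Set (ℝ × ℝ) :=
  emb.vpos '' A ∪ ⋃ e ∈ {e : G.E | ∀ v ∈ G.ends e, v ∈ A}, emb.arc e '' Set.Icc 0 1

/-- `p` is a point of the outer (infinite) face of the subgraph of `G`
induced by `A`. -/
def OuterPt (A : Set G.V) (p : ℝ × ℝ) : Prop :=
  p ∉ emb.image A ∧ ¬ Bornology.IsBounded (connectedComponentIn (emb.image A)ᶜ p)

/-- The vertex `v ∈ A` lies on the outer face of the subgraph of `G` induced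
by `A`. -/
def OnOuter (A : Set G.V) (v : G.V) : Prop :=
  v ∈ A ∧ emb.vpos v ∈ closure {p | emb.OuterPt A p}

/-- `V_i`: the set of vertices of level `i`; a vertex has level `i` if it lies
on the outer face after all vertices of smaller levels have been deleted. -/
def levelSet : ℕ → Set G.V
  | i => {v | emb.OnOuter {w | ∀ j, j < i → w ∉ levelSet j} v}
  termination_by i => i
  decreasing_by assumption

/-- The edges of `∂(G[A])`: edges of the subgraph induced by `A` lying on its
outer boundary. -/
def boundarySet (A : Set G.V) : Set G.E :=
  {e | (∀ v ∈ G.ends e, v ∈ A) ∧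
    emb.arc e '' Set.Icc 0 1 ⊆ closure {p | emb.OuterPt A p}}

/-- The curve in the plane traced by a closed walk. -/
def curveOf (C : ClosedWalk G) : Set (ℝ × ℝ) :=
  {p | ∃ i < C.n, p ∈ emb.arc (C.edge i) '' Set.Icc 0 1}

/-- A closed walk encloses the point `p` if some simple cycle contained in it
does. -/
def EnclosesPt (C : ClosedWalk G) (p : ℝ × ℝ) : Prop :=
  ∃ C' : ClosedWalk G, C'.IsSimpleCycle ∧ C'.edgeSet ⊆ C.edgeSet ∧
    JordanEncloses (emb.curveOf C') p

def EnclosesV (C : ClosedWalk G) (v : G.V) : Prop := emb.EnclosesPt C (emb.vpos v)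

end Multigraph.PlanarEmb

/-- `f(i) = max (i·k − k + t) 0`. -/
def fIdx (k t i : ℕ) : ℕ := i * k + t - k

namespace Multigraph.PlanarEmb

variable {G : Multigraph} (emb : G.PlanarEmb)

/-- The set of edges with one endpoint of level `a` and the other of level `b`. -/
def ebtw (a b : ℕ) : Set G.E :=
  {e | ∃ u v, G.ends e = s(u, v) ∧ u ∈ emb.levelSet a ∧ v ∈ emb.levelSet b}

/-- The `i`-th double layer `D_i = E_{i−1,i} ∪ E_i ∪ E_{i,i+1} ∪ E_{i+1}`. -/
def dlayer (i : ℕ) : Set G.E :=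
  emb.ebtw (i - 1) i ∪ emb.ebtw i i ∪ emb.ebtw i (i + 1) ∪ emb.ebtw (i + 1) (i + 1)

/-- `R_j = ⋃_{i ≡ j mod k} D_i`. -/
def rset (k j : ℕ) : Set G.E := ⋃ i ∈ {i : ℕ | i % k = j}, emb.dlayer i

/-- The edge set of `H_i`: the subgraph induced by the vertices of levels
`f(i)−1` through `f(i+1)+1`, minus the edges of `E_{f(i)−1}`. -/
def hiEdges (k t i : ℕ) : Set G.E :=
  {e | ∀ v ∈ G.ends e, ∃ j : ℕ, (fIdx k t i : ℤ) - 1 ≤ (j : ℤ) ∧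
      (j : ℤ) ≤ (fIdx k t (i + 1) : ℤ) + 1 ∧ v ∈ emb.levelSet j} \
  {e | ∀ v ∈ G.ends e, ∃ j : ℕ, (j : ℤ) = (fIdx k t i : ℤ) - 1 ∧ v ∈ emb.levelSet j}

/-- The vertices of `H_i` outside `V_{f(i)−1} ∪ V_{f(i+1)+1}` enclosed by the
circuit `Ca`. -/
def sliceU (k t i : ℕ) (Ca : ClosedWalk G) : Set G.V :=
  {v | (∃ j, fIdx k t i ≤ j ∧ j ≤ fIdx k t (i + 1) ∧ v ∈ emb.levelSet j) ∧
    emb.EnclosesV Ca v}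

/-- The 3EC slice `H_i^a`: contract every connected component of `G ∖ U` and
keep at most 3 parallel edges between any pair of vertices. -/
noncomputable def slice3EC (k t i : ℕ) (Ca : ClosedWalk G) : Multigraph :=
  (G.contractOutside (emb.sliceU k t i Ca)).trim 3

/-- The 3VC slice `H_i^a`: contract every connected component of `G ∖ U` and
delete all parallel edges. -/
noncomputable def slice3VC (k t i : ℕ) (Ca : ClosedWalk G) : Multigraph :=
  (G.contractOutside (emb.sliceU k t i Ca)).trim 1

/-- The edge of `G` underlying an edge of a 3EC slice. -/
noncomputable def sliceEdge3EC (k t i : ℕ) (Ca : ClosedWalk G) :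
    (emb.slice3EC k t i Ca).E → G.E := fun e => e.1.1

/-- The edge of `G` underlying an edge of a 3VC slice. -/
noncomputable def sliceEdge3VC (k t i : ℕ) (Ca : ClosedWalk G) :
    (emb.slice3VC k t i Ca).E → G.E := fun e => e.1.1

end Multigraph.PlanarEmb

/-! ### Branch decompositions and branchwidth -/

inductive BTree (α : Type) : Type
  | leaf : α → BTree α
  | node : BTree α → BTree α → BTree α

namespace BTree

variable {α : Type}

def leaves : BTree α → List α
  | .leaf a => [a]
  | .node l r => l.leaves ++ r.leaves

def subtrees : BTree α → List (BTree α)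
  | .leaf a => [.leaf a]
  | .node l r => .node l r :: (l.subtrees ++ r.subtrees)

end BTree

/-- The size of the separator associated with the edge bipartition
`(E₁, E(G) ∖ E₁)`: the number of vertices incident to edges of both parts. -/
noncomputable def Multigraph.sepSize (G : Multigraph) (E₁ : Set G.E) : ℕ :=
  {v : G.V | (∃ e ∈ E₁, v ∈ G.ends e) ∧ ∃ e ∉ E₁, v ∈ G.ends e}.ncard

/-- `G` has branchwidth at most `w`: some branch decomposition (a binary tree
whose leaves are in bijection with `E(G)`) has all its separators of size at
most `w`. -/
noncomputable def Multigraph.BranchWidthLE (G : Multigraph) (w : ℕ) : Prop :=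
  IsEmpty G.E ∨ ∃ T : BTree G.E, T.leaves.Nodup ∧ (∀ e : G.E, e ∈ T.leaves) ∧
    ∀ S ∈ T.subtrees, G.sepSize {e | e ∈ S.leaves} ≤ w


/- ### auxiliary lemmas -/

namespace Multigraph

variable {G : Multigraph}

lemma Reach.symm {A : Set G.V} {S : Set G.E} {x y : G.V} (h : G.Reach A S x y) :
    G.Reach A S y x := by
  unfold Multigraph.Reach at h ⊢
  induction h with
  | refl => exact Relation.ReflTransGen.refl
  | tail _ hab ih =>
    obtain ⟨ha, hb, e, he, hse⟩ := hab
    exact Relation.ReflTransGen.head ⟨hb, ha, e, he, by rw [hse, Sym2.eq_swap]⟩ ih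

lemma vert_succ_mod (C : ClosedWalk G) (k : ℕ) :
    C.vert ((k + 1) % C.n) = C.vert (k % C.n + 1) := by
  have hn := C.npos
  have h1 : k % C.n < C.n := Nat.mod_lt _ hn
  have h2 : (k % C.n + 1) % C.n = (k + 1) % C.n := Nat.mod_add_mod k C.n 1
  rcases lt_or_eq_of_le (Nat.succ_le_of_lt h1) with h | h
  · rw [← h2, Nat.mod_eq_of_lt h]
  · have h' : k % C.n + 1 = C.n := h
    rw [← h2, h', Nat.mod_self, C.closed]

lemma cyc_reach (C : ClosedWalk G) (A : Set G.V) (i m : ℕ)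
    (hA : ∀ k ≤ m, C.vert ((i + k) % C.n) ∈ A) :
    G.Reach A Set.univ (C.vert (i % C.n)) (C.vert ((i + m) % C.n)) := by
  induction m with
  | zero => exact Relation.ReflTransGen.refl
  | succ m ih =>
    refine Relation.ReflTransGen.tail
      (ih fun k hk => hA k (le_trans hk (Nat.le_succ m))) ?_
    refine ⟨by simpa using hA m (Nat.le_succ m), by simpa using hA (m + 1) le_rfl,
      C.edge ((i + m) % C.n), Set.mem_univ _, ?_⟩
    rw [C.ends_eq _ (Nat.mod_lt _ C.npos)]
    rw [show i + (m + 1) = (i + m) + 1 from rfl, vert_succ_mod]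

lemma cycle_reach_avoid (C : ClosedWalk G) (hC : C.IsSimpleCycle) (A : Set G.V)
    (w' : G.V) (hAw : ∀ k < C.n, C.vert k = w' ∨ C.vert k ∈ A)
    {a c : G.V} (ha : a ∈ C.vertexSet) (hc : c ∈ C.vertexSet)
    (haA : a ∈ A) (hcA : c ∈ A) : G.Reach A Set.univ a c := by
  obtain ⟨i, hi, rfl⟩ := ha
  obtain ⟨j, hj, rfl⟩ := hc
  set n := C.n with hn
  have npos := C.npos
  set m1 : ℕ := if i ≤ j then j - i else j + n - i with hm1
  have hm1n : m1 ≤ n := by rw [hm1]; split <;> omega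
  have him1 : (i + m1) % n = j := by
    rw [hm1]; split
    · rw [show i + (j - i) = j by omega, Nat.mod_eq_of_lt hj]
    · rw [show i + (j + n - i) = j + n by omega, Nat.add_mod_right, Nat.mod_eq_of_lt hj]
  set m2 : ℕ := n - m1 with hm2
  have hjm2 : (j + m2) % n = i := by
    have h3 : (j + m2) % n = ((i + m1) % n + m2) % n := by rw [him1]
    rw [h3, Nat.mod_add_mod, show i + m1 + m2 = i + n by omega, Nat.add_mod_right,
      Nat.mod_eq_of_lt hi]
  have key : (∀ k ≤ m1, C.vert ((i + k) % n) ∈ A) ∨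
      (∀ l ≤ m2, C.vert ((j + l) % n) ∈ A) := by
    by_contra hcon
    push_neg at hcon
    obtain ⟨⟨k, hk, hkA⟩, ⟨l, hl, hlA⟩⟩ := hcon
    have hk' : C.vert ((i + k) % n) = w' :=
      ((hAw _ (Nat.mod_lt _ npos)).resolve_right hkA)
    have hl' : C.vert ((j + l) % n) = w' :=
      ((hAw _ (Nat.mod_lt _ npos)).resolve_right hlA)
    have heq : (i + k) % n = (j + l) % n :=
      hC.2 _ (Nat.mod_lt _ npos) _ (Nat.mod_lt _ npos) (by rw [hk', hl'])
    have hk0 : k ≠ 0 := by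
      rintro rfl
      rw [Nat.add_zero, Nat.mod_eq_of_lt hi] at hkA; exact hkA haA
    have hkm1 : k ≠ m1 := by rintro rfl; rw [him1] at hkA; exact hkA hcA
    have hl0 : l ≠ 0 := by
      rintro rfl
      rw [Nat.add_zero, Nat.mod_eq_of_lt hj] at hlA; exact hlA hcA
    have hlm2 : l ≠ m2 := by rintro rfl; rw [hjm2] at hlA; exact hlA haA
    have h4 : (j + l) % n = (i + (m1 + l)) % n := by
      conv_rhs => rw [← Nat.add_assoc, ← Nat.mod_add_mod, him1]
    have h5 : k % n = (m1 + l) % n :=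
      Nat.ModEq.add_left_cancel' i (heq.trans h4)
    have h6 : k % n = k := Nat.mod_eq_of_lt (by omega)
    have h7 : (m1 + l) % n = m1 + l := Nat.mod_eq_of_lt (by omega)
    omega
  rcases key with h | h
  · have h8 := cyc_reach C A i m1 h
    rwa [Nat.mod_eq_of_lt hi, him1] at h8
  · have h8 := cyc_reach C A j m2 h
    rw [Nat.mod_eq_of_lt hj, hjm2] at h8
    exact h8.symm

lemma reach_remove {A : Set G.V} {u : G.V}
    (hrep : ∀ a ∈ A \ {u}, ∀ c ∈ A \ {u}, G.AdjV u a → G.AdjV u c →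
      G.Reach (A \ {u}) Set.univ a c)
    {x y : G.V} (h : G.Reach A Set.univ x y) (hy : y ∈ A \ {u}) :
    (x ∈ A \ {u} → G.Reach (A \ {u}) Set.univ x y) ∧
    (x = u → ∃ b ∈ A \ {u}, G.AdjV u b ∧ G.Reach (A \ {u}) Set.univ b y) := by
  induction h using Relation.ReflTransGen.head_induction_on with
  | refl =>
    refine ⟨fun _ => Relation.ReflTransGen.refl, fun hxu => absurd hxu hy.2⟩
  | head hstep htail ih =>
    rename_i a b
    obtain ⟨haA, hbA, e, -, hse⟩ := hstep
    by_cases hbu : b = u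
    · subst hbu
      obtain ⟨c, hc, hadjc, hreach⟩ := ih.2 rfl
      constructor
      · intro hx
        have hadja : G.AdjV b a := ⟨e, by rw [hse, Sym2.eq_swap]⟩
        exact (hrep a hx c hc hadja hadjc).trans hreach
      · intro hxu
        subst hxu
        exact ⟨c, hc, hadjc, hreach⟩
    · have hb' : b ∈ A \ {u} := ⟨hbA, hbu⟩
      have ihb := ih.1 hb'
      constructor
      · intro hx
        exact Relation.ReflTransGen.head ⟨hx, hb', e, Set.mem_univ _, hse⟩ ihb
      · intro hxu
        subst hxu
        exact ⟨b, hb', ⟨e, hse⟩, ihb⟩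

lemma reach_quot (S : Set G.V) {A : Set G.V} {B : Set (G.contractSet S).V}
    (hAB : ∀ a ∈ A, (Quotient.mk (G.contractSetoid S) a) ∈ B)
    {x y : G.V} (h : G.Reach A Set.univ x y) :
    (G.contractSet S).Reach B Set.univ (Quotient.mk (G.contractSetoid S) x)
      (Quotient.mk (G.contractSetoid S) y) := by
  induction h with
  | refl => exact Relation.ReflTransGen.refl
  | tail hxb hstep ih =>
    rename_i b c
    obtain ⟨hbA, hcA, e, -, hse⟩ := hstep
    by_cases hq : (Quotient.mk (G.contractSetoid S) b) = Quotient.mk (G.contractSetoid S) c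
    · exact hq ▸ ih
    · have hnd : ¬ (Sym2.map (Quotient.mk (G.contractSetoid S)) (G.ends e)).IsDiag := by
        rw [hse]
        simpa [Sym2.isDiag_iff_proj_eq] using hq
      refine ih.tail ⟨hAB b hbA, hAB c hcA, ⟨e, hnd⟩, Set.mem_univ _, ?_⟩
      show Sym2.map _ (G.ends e) = _
      rw [hse]; rfl

end Multigraph


/-- If `G` is triconnected, `C` is a simple cycle of `G`,
and `u`, `v` are two vertices of `G ∖ C` all of whose neighbors lie on `C`,
then identifying `u` and `v` yields a triconnected graph. -/
theorem identify_vertices_triconnected (G : Multigraph) (hG : G.VertexConn 3)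
    (C : ClosedWalk G) (hC : C.IsSimpleCycle) (u v : G.V) (huv : u ≠ v)
    (hu : u ∉ C.vertexSet) (hv : v ∉ C.vertexSet)
    (hNu : ∀ w, G.AdjV u w → w ∈ C.vertexSet)
    (hNv : ∀ w, G.AdjV v w → w ∈ C.vertexSet) :
    (G.contractSet {u, v}).VertexConn 3 := by
  classical
  set s := G.contractSetoid {u, v} with hs
  let Q : G.V → (G.contractSet {u, v}).V := fun a => Quotient.mk s a
  have hQeq : ∀ a b : G.V, Q a = Q b ↔
      (a = b ∨ (a ∈ ({u, v} : Set G.V) ∧ b ∈ ({u, v} : Set G.V))) := by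
    intro a b
    exact ⟨fun h => Quotient.exact h, fun h => Quotient.sound h⟩
  have hQout : ∀ p : (G.contractSet {u, v}).V, Q (Quotient.out p) = p :=
    fun p => Quotient.out_eq p
  have hQvu : Q v = Q u := (hQeq v u).mpr (Or.inr ⟨by simp, by simp⟩)
  intro W hW p hp q hq
  by_cases hz : Q u ∈ W
  · -- the merged vertex is among the deleted ones
    have hEcard : (W.erase (Q u)).card ≤ 1 := by
      have := Finset.card_erase_of_mem hz; omega
    have hw' : ∃ w' : G.V, ∀ a : G.V, Q a ∈ W ↔ a = u ∨ a = v ∨ a = w' := by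
      by_cases hne : (W.erase (Q u)).Nonempty
      · obtain ⟨r, hr⟩ := hne
        refine ⟨Quotient.out r, fun a => ⟨fun ha => ?_, fun ha => ?_⟩⟩
        · by_cases hau : Q a = Q u
          · rcases (hQeq a u).mp hau with rfl | ⟨ha', -⟩
            · exact Or.inl rfl
            · rcases ha' with rfl | rfl
              · exact Or.inl rfl
              · exact Or.inr (Or.inl rfl)
          · have haE : Q a ∈ W.erase (Q u) := Finset.mem_erase.mpr ⟨hau, ha⟩
            have h1 : Q a = r := Finset.card_le_one.mp hEcard _ haE _ hr
            have h2 : Q a = Q (Quotient.out r) := by rw [h1, hQout]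
            rcases (hQeq _ _).mp h2 with h | ⟨ha', -⟩
            · exact Or.inr (Or.inr h)
            · rcases ha' with rfl | rfl
              · exact Or.inl rfl
              · exact Or.inr (Or.inl rfl)
        · rcases ha with rfl | rfl | rfl
          · exact hz
          · rwa [hQvu]
          · rw [hQout r]; exact Finset.mem_of_mem_erase hr
      · refine ⟨u, fun a => ⟨fun ha => ?_, fun ha => ?_⟩⟩
        · by_cases hau : Q a = Q u
          · rcases (hQeq a u).mp hau with rfl | ⟨ha', -⟩
            · exact Or.inl rfl
            · rcases ha' with rfl | rfl
              · exact Or.inl rfl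
              · exact Or.inr (Or.inl rfl)
          · exact absurd ⟨Q a, Finset.mem_erase.mpr ⟨hau, ha⟩⟩ hne
        · rcases ha with rfl | rfl | rfl
          · exact hz
          · rwa [hQvu]
          · exact hz
    obtain ⟨w', hB⟩ := hw'
    have hpx : Q (Quotient.out p) = p := hQout p
    have hqy : Q (Quotient.out q) = q := hQout q
    set x := Quotient.out p
    set y := Quotient.out q
    have hxB : ¬(x = u ∨ x = v ∨ x = w') := fun h => hp (by rw [← hpx]; exact (hB x).mpr h)
    have hyB : ¬(y = u ∨ y = v ∨ y = w') := fun h => hq (by rw [← hqy]; exact (hB y).mpr h)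
    push_neg at hxB hyB
    set F : Finset G.V := {v, w'} with hF
    set A : Set G.V := (↑F)ᶜ with hA
    have hsub : ∀ a : G.V, a ∈ A \ {u} ↔ ¬(a = u ∨ a = v ∨ a = w') := by
      intro a
      simp only [hA, hF, Set.mem_diff, Set.mem_compl_iff, Finset.coe_insert,
        Finset.coe_singleton, Set.mem_insert_iff, Set.mem_singleton_iff]
      tauto
    have hrep : ∀ a ∈ A \ {u}, ∀ c ∈ A \ {u}, G.AdjV u a → G.AdjV u c →
        G.Reach (A \ {u}) Set.univ a c := by
      intro a ha c hc hadja hadjc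
      refine Multigraph.cycle_reach_avoid C hC (A \ {u}) w' ?_ (hNu a hadja) (hNu c hadjc) ha hc
      intro k hk
      by_cases hkw : C.vert k = w'
      · exact Or.inl hkw
      · refine Or.inr ((hsub _).mpr ?_)
        push_neg
        refine ⟨?_, ?_, hkw⟩
        · intro h; exact hu ⟨k, hk, h⟩
        · intro h; exact hv ⟨k, hk, h⟩
    have hxA : x ∈ A := ((hsub x).mpr (by push_neg; exact hxB)).1
    have hyA : y ∈ A := ((hsub y).mpr (by push_neg; exact hyB)).1
    have hFcard : F.card < 3 := by
      have h1 : F.card ≤ 2 := by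
        rw [hF]
        exact le_trans (Finset.card_insert_le _ _) (by simp)
      omega
    have hreach : G.Reach A Set.univ x y := hG F hFcard x hxA y hyA
    have h2 : G.Reach (A \ {u}) Set.univ x y :=
      (Multigraph.reach_remove hrep hreach ⟨hyA, hyB.1⟩).1 ⟨hxA, hxB.1⟩
    have hAB : ∀ a ∈ A \ {u},
        (Quotient.mk (G.contractSetoid {u, v}) a) ∈
          (↑W : Set ((G.contractSet {u, v}).V))ᶜ := by
      intro a ha haW
      exact ((hsub a).mp ha) ((hB a).mp haW)
    have hres := Multigraph.reach_quot {u, v} hAB h2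
    rwa [show Quotient.mk (G.contractSetoid {u, v}) x = p from hpx,
      show Quotient.mk (G.contractSetoid {u, v}) y = q from hqy] at hres
  · -- the merged vertex survives
    set W' : Finset G.V := W.image (fun r => Quotient.out r) with hW'def
    have hW' : W'.card < 3 := lt_of_le_of_lt Finset.card_image_le hW
    have hpx : Q (Quotient.out p) = p := hQout p
    have hqy : Q (Quotient.out q) = q := hQout q
    set x := Quotient.out p
    set y := Quotient.out q
    have hmemW' : ∀ a : G.V, Q a ∈ W → a ∈ W' := by
      intro a ha
      have h1 : Quotient.out (Q a) ∈ W' := Finset.mem_image_of_mem _ ha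
      have h2 : Q (Quotient.out (Q a)) = Q a := hQout _
      rcases (hQeq _ _).mp h2 with h | ⟨h3, h4⟩
      · rwa [← h]
      · exfalso
        apply hz
        have h5 : Q a = Q u := (hQeq a u).mpr (Or.inr ⟨h4, by simp⟩)
        rwa [h5] at ha
    have hxW' : x ∈ (↑W' : Set G.V)ᶜ := by
      intro hxw
      have hxw : x ∈ W' := hxw
      obtain ⟨r, hr, hrx⟩ := Finset.mem_image.mp hxw
      apply hp
      have h1 : r = p := by rw [← hQout r, hrx]; exact hpx
      rwa [← h1]
    have hyW' : y ∈ (↑W' : Set G.V)ᶜ := by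
      intro hyw
      have hyw : y ∈ W' := hyw
      obtain ⟨r, hr, hry⟩ := Finset.mem_image.mp hyw
      apply hq
      have h1 : r = q := by rw [← hQout r, hry]; exact hqy
      rwa [← h1]
    have hreach : G.Reach (↑W' : Set G.V)ᶜ Set.univ x y := hG W' hW' x hxW' y hyW'
    have hAB : ∀ a ∈ (↑W' : Set G.V)ᶜ,
        (Quotient.mk (G.contractSetoid {u, v}) a) ∈
          (↑W : Set ((G.contractSet {u, v}).V))ᶜ := by
      intro a ha haW
      exact ha (hmemW' a haW)
    have hres := Multigraph.reach_quot {u, v} hAB hreach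
    rwa [show Quotient.mk (G.contractSetoid {u, v}) x = p from hpx,
      show Quotient.mk (G.contractSetoid {u, v}) y = q from hqy] at hres
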